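/- Let G be a topological group and let K be a group of automorphisms of G of the form K = HS, where H is a subgroup of K and S = S⁻¹ is an equicontinuous set of automorphisms of G containing the identity. Then every open H-invariant subgroup of G contains an open K-invariant subgroup of G; consequently the discrete residuals coincide: Res_G(H) = Res_G(K). -/

import Mathlib

open Topology Pointwise

/-- The discrete residual of a group `A` of automorphisms of `G`: the intersection of all
open `A`-invariant subgroups of `G`. -/
def discreteResidual {G : Type*} [Group G] [TopologicalSpace G]
    (A : Subgroup (MulAut G)) : Subgroup G :=
  sInf {O : Subgroup G | IsOpen (O : Set G) ∧ ∀ a ∈ A, ⇑a '' (O : Set G) = (O : Set G)}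

/-- Let `K = H S` be a group of automorphisms of `G`, where `H ≤ K` is a subgroup and
`S = S⁻¹` is an equicontinuous set of automorphisms containing the identity.  Then every
open `H`-invariant subgroup of `G` contains an open `K`-invariant subgroup, and
consequently `Res_G(H) = Res_G(K)`. -/
theorem residual_eq_of_equicontinuous_complement {G : Type*} [Group G] [TopologicalSpace G]
    [IsTopologicalGroup G] (H K : Subgroup (MulAut G)) (S : Set (MulAut G))
    (hcont : ∀ k ∈ K, Continuous ⇑k)
    (hHK : H ≤ K) (hone : (1 : MulAut G) ∈ S) (hSinv : S⁻¹ = S)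
    (hK : (K : Set (MulAut G)) = (H : Set (MulAut G)) * S)
    (hSequi : ∀ x : G, ∀ U ∈ 𝓝 (1 : G), ∃ V ∈ 𝓝 x, ∀ s ∈ S, ∀ z ∈ V,
      s x * (s z)⁻¹ ∈ U) :
    (∀ O : Subgroup G, IsOpen (O : Set G) → (∀ h ∈ H, ⇑h '' (O : Set G) = (O : Set G)) →
      ∃ P : Subgroup G, IsOpen (P : Set G) ∧
        (∀ k ∈ K, ⇑k '' (P : Set G) = (P : Set G)) ∧ P ≤ O) ∧
    discreteResidual H = discreteResidual K := by
  have main : ∀ O : Subgroup G, IsOpen (O : Set G) →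
      (∀ h ∈ H, ⇑h '' (O : Set G) = (O : Set G)) →
      ∃ P : Subgroup G, IsOpen (P : Set G) ∧
        (∀ k ∈ K, ⇑k '' (P : Set G) = (P : Set G)) ∧ P ≤ O := by
    intro O hO hinv
    -- preimage under h equals O
    have hpre : ∀ h ∈ H, ∀ g : G, h g ∈ O ↔ g ∈ O := by
      intro h hh g
      constructor
      · intro hg
        have : h g ∈ ⇑h '' (O : Set G) := by rw [hinv h hh]; exact hg
        rcases this with ⟨y, hy, hyg⟩
        have : y = g := h.injective hyg
        rwa [this] at hy
      · intro hg
        have : h g ∈ ⇑h '' (O : Set G) := ⟨g, hg, rfl⟩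
        rwa [hinv h hh] at this
    set P : Subgroup G := ⨅ k ∈ K, O.comap (MulEquiv.toMonoidHom (k : MulAut G)) with hP
    have hmem : ∀ g : G, g ∈ P ↔ ∀ k ∈ K, k g ∈ O := by
      intro g
      simp [hP, Subgroup.mem_iInf, Subgroup.mem_comap]
    -- S ⊆ K
    have hSK : S ⊆ (K : Set (MulAut G)) := by
      intro s hs
      rw [hK]
      exact ⟨1, H.one_mem, s, hs, one_mul s⟩
    -- membership via S
    have hmemS : ∀ g : G, g ∈ P ↔ ∀ s ∈ S, s g ∈ O := by
      intro g
      rw [hmem g]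
      constructor
      · intro hall s hs
        exact hall s (hSK hs)
      · intro hall k hk
        have : k ∈ (H : Set (MulAut G)) * S := by rw [← hK]; exact hk
        rcases this with ⟨h, hh, s, hs, rfl⟩
        have : (h * s) g = h (s g) := rfl
        rw [this, hpre h hh]
        exact hall s hs
    -- P contains a nbhd of 1
    obtain ⟨V, hV, hVs⟩ := hSequi 1 (O : Set G) (hO.mem_nhds O.one_mem)
    have hVP : V ⊆ (P : Set G) := by
      intro z hz
      rw [SetLike.mem_coe, hmemS]
      intro s hs
      have := hVs s hs z hz
      rw [map_one, one_mul] at this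
      exact (O.inv_mem_iff).1 this
    have hPopen : IsOpen (P : Set G) :=
      Subgroup.isOpen_of_mem_nhds P (Filter.mem_of_superset hV hVP)
    refine ⟨P, hPopen, ?_, ?_⟩
    · intro k hk
      ext g
      constructor
      · rintro ⟨x, hx, rfl⟩
        rw [SetLike.mem_coe, hmem]
        intro k' hk'
        have : k' (k x) = (k' * k) x := rfl
        rw [this]
        exact (hmem x).1 hx (k' * k) (K.mul_mem hk' hk)
      · intro hg
        refine ⟨k⁻¹ g, ?_, ?_⟩
        · rw [SetLike.mem_coe, hmem]
          intro k' hk'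
          have : k' (k⁻¹ g) = (k' * k⁻¹) g := rfl
          rw [this]
          exact (hmem g).1 hg (k' * k⁻¹) (K.mul_mem hk' (K.inv_mem hk))
        · show k (k⁻¹ g) = g
          simp
    · intro g hg
      have := (hmemS g).1 hg 1 hone
      simpa using this
  refine ⟨main, ?_⟩
  apply le_antisymm
  · apply sInf_le_sInf
    rintro O ⟨hO, hKinv⟩
    exact ⟨hO, fun h hh => hKinv h (hHK hh)⟩
  · apply le_sInf
    rintro O ⟨hO, hHinv⟩
    obtain ⟨P, hPopen, hPinv, hPO⟩ := main O hO hHinv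
    exact le_trans (sInf_le ⟨hPopen, hPinv⟩) hPO
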